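/- Let q₀ ≥ 2 be a prime power and k ≥ 60 a real number. Then log_{q₀}(1 + (q₀−1)k + ((q₀−1)k)²) ≤ log₂(1 + k + k²). In other words, the function q₀ ↦ log_{q₀}(1 + (q₀−1)k + ((q₀−1)k)²) is maximized at q₀ = 2 over prime powers q₀. -/
import Mathlib


/-- Let `q₀ ≥ 2` be a prime power and `k ≥ 60` a real number.  Then
`log_{q₀}(1 + (q₀−1)k + ((q₀−1)k)²) ≤ log₂(1 + k + k²)`; i.e. the function
`q₀ ↦ log_{q₀}(1 + (q₀−1)k + ((q₀−1)k)²)` is maximized at `q₀ = 2`. -/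
theorem stmt16 (q₀ : ℕ) (hq : IsPrimePow q₀) (hq2 : 2 ≤ q₀) (k : ℝ) (hk : 60 ≤ k) :
    Real.logb q₀ (1 + ((q₀ : ℝ) - 1) * k + (((q₀ : ℝ) - 1) * k) ^ 2) ≤
      Real.logb 2 (1 + k + k ^ 2) := by
  have hk0 : (0:ℝ) < k := by linarith
  rcases eq_or_lt_of_le hq2 with h2 | h3
  · rw [← h2]; norm_num
  · have hq3 : (3:ℝ) ≤ (q₀:ℝ) := by exact_mod_cast h3
    set q : ℝ := (q₀:ℝ) with hqdef
    have hq1 : (1:ℝ) < q := by linarith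
    have hlogq : 0 < Real.log q := Real.log_pos hq1
    have hlog2 : 0 < Real.log 2 := Real.log_pos (by norm_num)
    set f : ℝ := 1 + (q - 1) * k + ((q - 1) * k) ^ 2 with hfdef
    set L : ℝ := 1 + k + k ^ 2 with hLdef
    have hf0 : 0 < f := by nlinarith
    have hL0 : 0 < L := by nlinarith
    rw [Real.logb, Real.logb, div_le_div_iff₀ hlogq hlog2]
    -- bound log f ≤ 2 (log q + log k)
    have hkk : 60 * k ≤ k * k := mul_le_mul_of_nonneg_right hk hk0.le
    have hfle : f ≤ (q * k) ^ 2 := by nlinarith [mul_le_mul_of_nonneg_left hkk (by linarith : (0:ℝ) ≤ 2*q-1)]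
    have h1 : Real.log f ≤ 2 * (Real.log q + Real.log k) := by
      calc Real.log f ≤ Real.log ((q * k) ^ 2) := Real.log_le_log hf0 hfle
        _ = 2 * (Real.log q + Real.log k) := by
            rw [Real.log_pow, Real.log_mul (by linarith) (by linarith)]; push_cast; ring
    have h2 : 2 * Real.log k ≤ Real.log L := by
      calc 2 * Real.log k = Real.log (k ^ 2) := by rw [Real.log_pow]; push_cast; ring
        _ ≤ Real.log L := Real.log_le_log (by positivity) (by nlinarith)
    -- numeric bounds
    have hexp : Real.exp 1 < 2.7182818286 := Real.exp_one_lt_d9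
    have hexp0 : 0 < Real.exp 1 := Real.exp_pos 1
    have hlog2' : Real.log 2 < 0.6931471808 := Real.log_two_lt_d9
    have hlogq1 : 1 < Real.log q := by
      have : Real.exp 1 < q := by linarith
      calc (1:ℝ) = Real.log (Real.exp 1) := (Real.log_exp 1).symm
        _ < Real.log q := Real.log_lt_log hexp0 this
    have hlogk4 : 4 ≤ Real.log k := by
      have h4 : Real.exp 4 < k := by
        have : Real.exp 4 = (Real.exp 1) ^ 4 := by
          rw [← Real.exp_nat_mul]; norm_num
        rw [this]
        have h4' : Real.exp 1 ^ 4 < 2.7182818286 ^ 4 :=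
          pow_lt_pow_left₀ hexp hexp0.le (by norm_num)
        have : (2.7182818286:ℝ) ^ 4 < 60 := by norm_num
        linarith
      have := Real.log_lt_log (Real.exp_pos 4) h4
      rw [Real.log_exp] at this
      linarith
    nlinarith [mul_pos hlogq hlog2, mul_le_mul_of_nonneg_right h1 hlog2.le,
      mul_le_mul_of_nonneg_left h2 hlogq.le,
      mul_le_mul_of_nonneg_right hlogk4 (by linarith : (0:ℝ) ≤ Real.log q - Real.log 2)]
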